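/- (Gradient flows of functions with η-gradient of constant length are affinely parameterized geodesics; flat version.) Let f : ℝ^{1+n} → ℝ be twice continuously differentiable, and let G : ℝ^{1+n} → ℝ^{1+n} be its gradient with respect to the Minkowski form η, i.e. G(x)^0 = −∂_0 f(x) and G(x)^i = ∂_i f(x) for i = 1,…,n. Assume that the function x ↦ η(G(x), G(x)) = −(∂_0 f(x))² + Σ_{i=1}^n (∂_i f(x))² is constant on ℝ^{1+n}. Then every C¹ solution x : I → ℝ^{1+n} of the ODE x'(s) = G(x(s)) satisfies x''(s) = 0 for all s ∈ I; i.e. x(s) = x(s₀) + (s − s₀)·G(x(s₀)) is an affinely parameterized straight line. -/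

import Mathlib

open Set MeasureTheory Filter Topology
open scoped RealInnerProductSpace

noncomputable section

/-- Minkowski space-time `ℝ^{1+n} = ℝ × ℝ^n`. -/
abbrev Mink (n : ℕ) : Type := ℝ × EuclideanSpace ℝ (Fin n)

/-- A vector is timelike future-directed if `v⁰ > |v⃗|`. -/
def timelikeFD {n : ℕ} (v : Mink n) : Prop := ‖v.2‖ < v.1

/-- A vector is causal future-directed if `v ≠ 0` and `v⁰ ≥ |v⃗|`. -/
def causalFD {n : ℕ} (v : Mink n) : Prop := v ≠ 0 ∧ ‖v.2‖ ≤ v.1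

/-- A vector is null future-directed if `v ≠ 0` and `v⁰ = |v⃗|`. -/
def nullFD {n : ℕ} (v : Mink n) : Prop := v ≠ 0 ∧ ‖v.2‖ = v.1

/-- A vector is causal past-directed if `-v` is causal future-directed. -/
def causalPD {n : ℕ} (v : Mink n) : Prop := causalFD (-v)

/-- The Minkowski bilinear form `η(x,y) = -x⁰y⁰ + ⟨x⃗,y⃗⟩`. -/
def minkBF {n : ℕ} (x y : Mink n) : ℝ := -(x.1 * y.1) + ⟪x.2, y.2⟫

/-- The Euclidean norm on `ℝ^{1+n}`. -/
def eNorm {n : ℕ} (v : Mink n) : ℝ := Real.sqrt (v.1 ^ 2 + ‖v.2‖ ^ 2)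

/-- A future-directed causal curve defined on `S ⊆ ℝ`: locally Lipschitz, with
almost-everywhere derivative causal future-directed. -/
def IsCausalCurveOn {n : ℕ} (γ : ℝ → Mink n) (S : Set ℝ) : Prop :=
  (∀ a b : ℝ, Icc a b ⊆ S → ∃ K : NNReal, LipschitzOnWith K γ (Icc a b)) ∧
  (∀ᵐ s ∂(volume.restrict S), ∃ v : Mink n, HasDerivWithinAt γ v S s ∧ causalFD v)

/-- A future-directed timelike curve defined on `S ⊆ ℝ`. -/
def IsTimelikeCurveOn {n : ℕ} (γ : ℝ → Mink n) (S : Set ℝ) : Prop :=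
  (∀ a b : ℝ, Icc a b ⊆ S → ∃ K : NNReal, LipschitzOnWith K γ (Icc a b)) ∧
  (∀ᵐ s ∂(volume.restrict S), ∃ v : Mink n, HasDerivWithinAt γ v S s ∧ timelikeFD v)

/-- A past-directed causal curve defined on `S ⊆ ℝ`. -/
def IsPastCausalCurveOn {n : ℕ} (γ : ℝ → Mink n) (S : Set ℝ) : Prop :=
  (∀ a b : ℝ, Icc a b ⊆ S → ∃ K : NNReal, LipschitzOnWith K γ (Icc a b)) ∧
  (∀ᵐ s ∂(volume.restrict S), ∃ v : Mink n, HasDerivWithinAt γ v S s ∧ causalPD v)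

/-- `chron p q`: there is a future-directed timelike curve from `p` to `q`. -/
def chron {n : ℕ} (p q : Mink n) : Prop :=
  ∃ (a b : ℝ) (γ : ℝ → Mink n), a < b ∧ IsTimelikeCurveOn γ (Icc a b) ∧ γ a = p ∧ γ b = q

/-- `caus p q`: `q = p`, or there is a future-directed causal curve from `p` to `q`. -/
def caus {n : ℕ} (p q : Mink n) : Prop :=
  p = q ∨ ∃ (a b : ℝ) (γ : ℝ → Mink n), a < b ∧ IsCausalCurveOn γ (Icc a b) ∧ γ a = p ∧ γ b = q

/-- `causPast p q`: `q = p`, or there is a past-directed causal curve from `p` to `q`. -/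
def causPast {n : ℕ} (p q : Mink n) : Prop :=
  p = q ∨ ∃ (a b : ℝ) (γ : ℝ → Mink n), a < b ∧ IsPastCausalCurveOn γ (Icc a b) ∧ γ a = p ∧ γ b = q

/-- The timelike future `I⁺(U)`. -/
def Iplus {n : ℕ} (U : Set (Mink n)) : Set (Mink n) := {q | ∃ p ∈ U, chron p q}

/-- The causal future `J⁺(U)`. -/
def Jplus {n : ℕ} (U : Set (Mink n)) : Set (Mink n) := {q | ∃ p ∈ U, caus p q}

/-- The causal past `J⁻(U)`. -/
def Jminus {n : ℕ} (U : Set (Mink n)) : Set (Mink n) := {q | ∃ p ∈ U, causPast p q}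

/-- An inextendible future-directed timelike curve: defined on all of `ℝ`, locally
Lipschitz, parameterized by Euclidean arclength, with a.e. timelike future derivative. -/
def IsInextTimelike {n : ℕ} (γ : ℝ → Mink n) : Prop :=
  LocallyLipschitz γ ∧
  ∀ᵐ s : ℝ, ∃ v : Mink n, HasDerivAt γ v s ∧ timelikeFD v ∧ eNorm v = 1


lemma minkBF_symm {n : ℕ} (x y : Mink n) : minkBF x y = minkBF y x := by
  simp [minkBF, real_inner_comm, mul_comm]

lemma minkBF_nondeg {n : ℕ} (v : Mink n) (h : ∀ w, minkBF v w = 0) : v = 0 := by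
  have h1 := h (-v.1, v.2)
  simp only [minkBF] at h1
  rw [real_inner_self_eq_norm_sq] at h1
  have h2 : v.1 ^ 2 + ‖v.2‖ ^ 2 = 0 := by ring_nf at h1 ⊢; linarith
  have hv1 : v.1 = 0 := by nlinarith [sq_nonneg v.1, sq_nonneg ‖v.2‖]
  have hv2 : ‖v.2‖ = 0 := by nlinarith [sq_nonneg ‖v.2‖]
  exact Prod.ext hv1 (norm_eq_zero.mp hv2)

/-- bundled `minkBF · w` -/
def minkCLM {n : ℕ} (w : Mink n) : Mink n →L[ℝ] ℝ :=
  (-w.1) • ContinuousLinearMap.fst ℝ ℝ (EuclideanSpace ℝ (Fin n)) +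
    (innerSL ℝ w.2).comp (ContinuousLinearMap.snd ℝ ℝ (EuclideanSpace ℝ (Fin n)))

lemma minkCLM_apply {n : ℕ} (w v : Mink n) : minkCLM w v = minkBF v w := by
  simp only [minkCLM, ContinuousLinearMap.add_apply, ContinuousLinearMap.smul_apply,
    ContinuousLinearMap.coe_fst', ContinuousLinearMap.comp_apply, ContinuousLinearMap.coe_snd',
    innerSL_apply_apply, minkBF, smul_eq_mul]
  rw [real_inner_comm]
  ring

variable {n : ℕ} {f : Mink n → ℝ} {G : Mink n → Mink n}

lemma G_eq (hG : ∀ (x w : Mink n), minkBF (G x) w = fderiv ℝ f x w) :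
    G = fun x => (-(fderiv ℝ f x ((1:ℝ), (0 : EuclideanSpace ℝ (Fin n)))),
      (InnerProductSpace.toDual ℝ (EuclideanSpace ℝ (Fin n))).symm
        ((fderiv ℝ f x).comp (ContinuousLinearMap.inr ℝ ℝ (EuclideanSpace ℝ (Fin n))))) := by
  funext x
  refine Prod.ext ?_ ?_
  · show (G x).1 = -(fderiv ℝ f x ((1:ℝ), (0 : EuclideanSpace ℝ (Fin n))))
    have h1 := hG x ((1:ℝ), (0 : EuclideanSpace ℝ (Fin n)))
    simp [minkBF] at h1
    linarith
  · show (G x).2 = (InnerProductSpace.toDual ℝ (EuclideanSpace ℝ (Fin n))).symm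
        ((fderiv ℝ f x).comp (ContinuousLinearMap.inr ℝ ℝ (EuclideanSpace ℝ (Fin n))))
    have key : (InnerProductSpace.toDual ℝ (EuclideanSpace ℝ (Fin n))) (G x).2 =
        (fderiv ℝ f x).comp (ContinuousLinearMap.inr ℝ ℝ (EuclideanSpace ℝ (Fin n))) := by
      ext e
      have h2 := hG x ((0:ℝ), e)
      simp [minkBF] at h2
      simpa [InnerProductSpace.toDual_apply_apply] using h2
    rw [← key, LinearIsometryEquiv.symm_apply_apply]

lemma G_contDiff (hf : ContDiff ℝ 2 f)
    (hG : ∀ (x w : Mink n), minkBF (G x) w = fderiv ℝ f x w) : ContDiff ℝ 1 G := by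
  rw [G_eq hG]
  have hf' : ContDiff ℝ 1 (fderiv ℝ f) := hf.fderiv_right (by norm_num)
  exact ((hf'.clm_apply contDiff_const).neg).prodMk
    (((InnerProductSpace.toDual ℝ (EuclideanSpace ℝ (Fin n))).symm.contDiff).comp
      (hf'.clm_comp contDiff_const))

lemma fderiv_G_key (hf : ContDiff ℝ 2 f)
    (hG : ∀ (x w : Mink n), minkBF (G x) w = fderiv ℝ f x w)
    (hconst : ∃ c : ℝ, ∀ x : Mink n, minkBF (G x) (G x) = c) (a : Mink n) :
    fderiv ℝ G a (G a) = 0 := by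
  obtain ⟨c, hc⟩ := hconst
  have hGc : ContDiff ℝ 1 G := G_contDiff hf hG
  have hf' : ContDiff ℝ 1 (fderiv ℝ f) := hf.fderiv_right (by norm_num)
  have hfd : ∀ y, HasFDerivAt f (fderiv ℝ f y) y := fun y =>
    ((hf.differentiable (by norm_num)) y).hasFDerivAt
  set DG := fderiv ℝ G a with hDG
  set f'' := fderiv ℝ (fderiv ℝ f) a with hf''def
  have hDGd : HasFDerivAt G DG a := ((hGc.differentiable one_ne_zero) a).hasFDerivAt
  have hf''d : HasFDerivAt (fderiv ℝ f) f'' a := ((hf'.differentiable one_ne_zero) a).hasFDerivAt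
  have mixed : ∀ v w : Mink n, minkBF (DG v) w = f'' v w := by
    intro v w
    have h1 : HasFDerivAt (fun y => minkCLM w (G y)) ((minkCLM w).comp DG) a :=
      (minkCLM w).hasFDerivAt.comp a hDGd
    have h2 : HasFDerivAt (fun y => minkCLM w (G y))
        ((ContinuousLinearMap.apply ℝ ℝ w).comp f'') a := by
      have heq : (fun y => minkCLM w (G y)) = fun y =>
          (ContinuousLinearMap.apply ℝ ℝ w) (fderiv ℝ f y) := by
        funext y; simp [minkCLM_apply, hG]
      rw [heq]
      exact (ContinuousLinearMap.apply ℝ ℝ w).hasFDerivAt.comp a hf''d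
    have h3 := h1.unique h2
    have h4 := congrFun (congrArg (fun (L : Mink n →L[ℝ] ℝ) => (L : Mink n → ℝ)) h3) v
    simpa [minkCLM_apply] using h4
  have hsymm : ∀ v w, f'' v w = f'' w v := second_derivative_symmetric hfd hf''d
  have hzero : ∀ w, f'' w (G a) = 0 := by
    intro w
    have hconst' : (fun y => (fderiv ℝ f y) (G y)) = fun _ => c := by
      funext y; rw [← hG y (G y)]; exact hc y
    have h4 : HasFDerivAt (fun y => (fderiv ℝ f y) (G y))
        ((fderiv ℝ f a).comp DG + f''.flip (G a)) a := hf''d.clm_apply hDGd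
    have h5 : HasFDerivAt (fun y => (fderiv ℝ f y) (G y)) (0 : Mink n →L[ℝ] ℝ) a := by
      rw [hconst']; exact hasFDerivAt_const c a
    have h6 := h4.unique h5
    have h7 := congrFun (congrArg (fun (L : Mink n →L[ℝ] ℝ) => (L : Mink n → ℝ)) h6) w
    simp only [ContinuousLinearMap.add_apply, ContinuousLinearMap.comp_apply,
      ContinuousLinearMap.flip_apply, ContinuousLinearMap.zero_apply] at h7
    -- h7 : (fderiv ℝ f a) (DG w) + f'' w (G a) = 0
    have h8 : (fderiv ℝ f a) (DG w) = f'' w (G a) := by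
      rw [← hG a (DG w), minkBF_symm, mixed]
    linarith
  apply minkBF_nondeg
  intro w
  rw [mixed (G a) w, hsymm (G a) w, hzero w]


/-- if the η-gradient `G` of a C² function `f` has constant η-length, then
the integral curves of `G` are affinely parameterized straight lines. -/
theorem gradient_flow_constant_length_is_geodesic (n : ℕ) (f : Mink n → ℝ)
    (G : Mink n → Mink n) (hf : ContDiff ℝ 2 f)
    (hG : ∀ (x w : Mink n), minkBF (G x) w = fderiv ℝ f x w)
    (hconst : ∃ c : ℝ, ∀ x : Mink n, minkBF (G x) (G x) = c)
    (I : Set ℝ) (hI : I.OrdConnected)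
    (x : ℝ → Mink n)
    (hx : ∀ s ∈ I, HasDerivWithinAt x (G (x s)) I s) :
    ∀ s₀ ∈ I, ∀ s ∈ I, x s = x s₀ + (s - s₀) • G (x s₀) := by
  intro s₀ hs₀ s hs
  have hGc : ContDiff ℝ 1 G := G_contDiff hf hG
  have hconv : Convex ℝ I := convex_iff_ordConnected.mpr hI
  have hy : ∀ t ∈ I, HasDerivWithinAt (fun u => G (x u)) (0 : Mink n) I t := by
    intro t ht
    have h1 : HasFDerivAt G (fderiv ℝ G (x t)) (x t) :=
      ((hGc.differentiable one_ne_zero) (x t)).hasFDerivAt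
    have h2 := h1.comp_hasDerivWithinAt t (hx t ht)
    rwa [fderiv_G_key hf hG hconst (x t)] at h2
  have hyconst : ∀ t ∈ I, G (x t) = G (x s₀) := by
    intro t ht
    have hb := hconv.norm_image_sub_le_of_norm_hasDerivWithin_le
      (f' := fun _ => (0 : Mink n)) (C := 0) hy (fun _ _ => by simp) hs₀ ht
    have hb2 : ‖G (x t) - G (x s₀)‖ ≤ 0 := by simpa using hb
    have := le_antisymm hb2 (norm_nonneg _)
    rw [norm_eq_zero, sub_eq_zero] at this
    exact this
  set v := G (x s₀) with hv
  have hg : ∀ t ∈ I, HasDerivWithinAt (fun u => x u - u • v) (0 : Mink n) I t := by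
    intro t ht
    have h1 : HasDerivWithinAt (fun u : ℝ => u • v) v I t := by
      simpa using ((hasDerivAt_id t).smul_const v).hasDerivWithinAt
    have h2 := (hx t ht).sub h1
    rw [hyconst t ht, sub_self] at h2
    exact h2
  have hb := hconv.norm_image_sub_le_of_norm_hasDerivWithin_le
    (f' := fun _ => (0 : Mink n)) (C := 0) hg (fun _ _ => by simp) hs₀ hs
  have hb2 : ‖(x s - s • v) - (x s₀ - s₀ • v)‖ ≤ 0 := by simpa using hb
  have h := sub_eq_zero.mp (norm_eq_zero.mp (le_antisymm hb2 (norm_nonneg _)))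
  have h2 : x s = x s₀ - s₀ • v + s • v := eq_add_of_sub_eq h
  rw [h2, sub_smul]
  abel
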